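/- Ergodicity of the stationary Markov shift when bounded harmonic functions are trivial (the discrete-time counterpart of Theorem 1.2, obtained from Lemma 5.1 together with the equivalence between extremality of the invariant measure and ergodicity of the shift): Let (X, 𝓑) be a measurable space, κ a Markov kernel on X, and μ a probability measure on X invariant under κ (μ.bind κ = μ). Let P_μ be the probability measure on the path space X^ℕ of the stationary Markov chain with initial distribution μ and transition kernel κ, i.e., P_μ = ∫_X P_x μ(dx) where P_x is the Ionescu–Tulcea law of the chain (ω_0, ω_1, ω_2, …) started at ω_0 = x with one-step transitions κ. Assume every bounded measurable h : X → ℝ with ∫_X h(y) κ(x,dy) = h(x) for μ-a.e. x is μ-a.e. constant. Then the one-sided shift θ : X^ℕ → X^ℕ, θ(ω)(n) = ω(n+1), preserves P_μ and is ergodic: every measurable A ⊆ X^ℕ with θ^{-1}(A) = A satisfies P_μ(A) ∈ {0, 1}. -/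

import Mathlib

open MeasureTheory ProbabilityTheory Set
open scoped ENNReal

namespace StationaryShiftAux

variable {X : Type*} [MeasurableSpace X]

/-- initial window of length `n+1` -/
def Wn (n : ℕ) (ω : ℕ → X) : Fin (n + 1) → X := fun i => ω (i : ℕ)

/-- shift by `n` -/
def Th (n : ℕ) (ω : ℕ → X) : ℕ → X := fun k => ω (n + k)

lemma measurable_Wn (n : ℕ) : Measurable (Wn (X := X) n) :=
  measurable_pi_lambda _ fun _ => measurable_pi_apply _

lemma measurable_Th (n : ℕ) : Measurable (Th (X := X) n) :=
  measurable_pi_lambda _ fun _ => measurable_pi_apply _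

lemma measurable_snoc (m : ℕ) :
    Measurable (fun p : (Fin (m + 1) → X) × X => (Fin.snoc p.1 p.2 : Fin (m + 2) → X)) := by
  apply measurable_pi_lambda
  intro j
  induction j using Fin.lastCases with
  | last => simpa [Fin.snoc_last] using measurable_snd
  | cast i => simp only [Fin.snoc_castSucc]; exact (measurable_pi_apply i).comp measurable_fst

lemma snoc_lt {m : ℕ} (w : Fin (m + 1) → X) (y : X) (j : Fin (m + 2)) (h : (j : ℕ) < m + 1) :
    (Fin.snoc w y : Fin (m + 2) → X) j = w ⟨j, h⟩ := by
  simp only [Fin.snoc, h, dif_pos, cast_eq]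
  rfl

lemma snoc_last' {m : ℕ} (w : Fin (m + 1) → X) (y : X) (j : Fin (m + 2)) (h : (j : ℕ) = m + 1) :
    (Fin.snoc w y : Fin (m + 2) → X) j = y := by
  have h' : ¬ ((j : ℕ) < m + 1) := by omega
  simp only [Fin.snoc, h', dif_neg, cast_eq, not_false_iff]

lemma forall_last_iff {m : ℕ} (P : Fin (m + 2) → Prop) :
    (∀ j, P j) ↔ (∀ i : Fin (m + 1), P i.castSucc) ∧ P (Fin.last (m + 1)) :=
  ⟨fun h => ⟨fun i => h _, h _⟩, fun h j => Fin.lastCases h.2 h.1 j⟩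

lemma indc {α β : Type*} (f : α → β) (s : Set β) (x : α) :
    (f ⁻¹' s).indicator (1 : α → ℝ≥0∞) x = s.indicator 1 (f x) := by
  by_cases h : f x ∈ s <;> simp [Set.indicator_apply, h]

lemma measure_inter_lintegral {α : Type*} [MeasurableSpace α] (m : Measure α) {P Q : Set α}
    (hP : MeasurableSet P) (hQ : MeasurableSet Q) :
    m (P ∩ Q) = ∫⁻ x, P.indicator 1 x * Q.indicator 1 x ∂m := by
  rw [← lintegral_indicator_one (hP.inter hQ)]
  refine lintegral_congr fun x => ?_
  by_cases h1 : x ∈ P <;> by_cases h2 : x ∈ Q <;>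
    simp [Set.indicator_apply, h1, h2]

lemma lintegral_indicator_mul {α : Type*} [MeasurableSpace α] (m : Measure α) {P : Set α}
    (hP : MeasurableSet P) (f : α → ℝ≥0∞) :
    ∫⁻ x, P.indicator 1 x * f x ∂m = ∫⁻ x in P, f x ∂m := by
  rw [← lintegral_indicator hP]
  refine lintegral_congr fun x => ?_
  by_cases h : x ∈ P <;> simp [Set.indicator_apply, h]

variable (κ : Kernel X X) [IsMarkovKernel κ]

/-- iterated kernel smoothing, peeling the last coordinate first -/
noncomputable def Tm : (m : ℕ) → ((Fin (m + 1) → X) → ℝ≥0∞) → X → ℝ≥0∞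
  | 0, G, x => G fun _ => x
  | m + 1, G, x => Tm m (fun v => ∫⁻ y, G (Fin.snoc v y) ∂κ (v (Fin.last m))) x

lemma measurable_smooth {m : ℕ} {G : (Fin (m + 2) → X) → ℝ≥0∞} (hG : Measurable G) :
    Measurable fun v : Fin (m + 1) → X => ∫⁻ y, G (Fin.snoc v y) ∂κ (v (Fin.last m)) := by
  have h : Measurable (Function.uncurry fun (v : Fin (m + 1) → X) (y : X) => G (Fin.snoc v y)) :=
    hG.comp (measurable_snoc m)
  exact Measurable.lintegral_kernel_prod_right
    (κ := κ.comap (fun v : Fin (m + 1) → X => v (Fin.last m)) (measurable_pi_apply _)) h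

lemma measurable_Tm : ∀ (m : ℕ) (G : (Fin (m + 1) → X) → ℝ≥0∞), Measurable G →
    Measurable (Tm κ m G)
  | 0, G, hG => hG.comp (measurable_pi_lambda _ fun _ => measurable_id)
  | m + 1, G, hG => measurable_Tm m _ (measurable_smooth κ hG)

variable (Pμ : Measure (ℕ → X)) [IsProbabilityMeasure Pμ]

/-- the one-step Markov property hypothesis -/
def MarkovHyp : Prop :=
  ∀ (n : ℕ) (F : (Fin (n + 1) → X) → ℝ) (g : X → ℝ),
    Measurable F → Measurable g →
    (∃ C, ∀ v, |F v| ≤ C) → (∃ C, ∀ x, |g x| ≤ C) →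
    ∫ ω, F (fun i => ω (i : ℕ)) * g (ω (n + 1)) ∂Pμ =
      ∫ ω, F (fun i => ω (i : ℕ)) * ∫ y, g y ∂(κ (ω n)) ∂Pμ

lemma markovL (hM : MarkovHyp κ Pμ) (n : ℕ) {F : (Fin (n + 1) → X) → ℝ≥0∞} {g : X → ℝ≥0∞}
    (hF : Measurable F) (hg : Measurable g) (hF1 : ∀ v, F v ≤ 1) (hg1 : ∀ x, g x ≤ 1) :
    ∫⁻ ω, F (Wn n ω) * g (ω (n + 1)) ∂Pμ = ∫⁻ ω, F (Wn n ω) * ∫⁻ y, g y ∂κ (ω n) ∂Pμ := by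
  have hFm : Measurable fun ω : ℕ → X => F (Wn n ω) := hF.comp (measurable_Wn n)
  have hgm : Measurable fun ω : ℕ → X => g (ω (n + 1)) := hg.comp (measurable_pi_apply _)
  have hkm : Measurable fun ω : ℕ → X => ∫⁻ y, g y ∂κ (ω n) :=
    (Measurable.lintegral_kernel (κ := κ) hg).comp (measurable_pi_apply n)
  have hk1 : ∀ ω : ℕ → X, (∫⁻ y, g y ∂κ (ω n)) ≤ 1 := fun ω => by
    calc ∫⁻ y, g y ∂κ (ω n) ≤ ∫⁻ _, 1 ∂κ (ω n) := lintegral_mono hg1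
    _ = 1 := by simp
  have hL : ∫⁻ ω, F (Wn n ω) * g (ω (n + 1)) ∂Pμ ≠ ⊤ := by
    refine ne_of_lt (lt_of_le_of_lt ?_ ENNReal.one_lt_top)
    calc ∫⁻ ω, F (Wn n ω) * g (ω (n + 1)) ∂Pμ ≤ ∫⁻ _, 1 ∂Pμ :=
      lintegral_mono fun ω => mul_le_one' (hF1 _) (hg1 _)
    _ = 1 := by simp
  have hR : ∫⁻ ω, F (Wn n ω) * ∫⁻ y, g y ∂κ (ω n) ∂Pμ ≠ ⊤ := by
    refine ne_of_lt (lt_of_le_of_lt ?_ ENNReal.one_lt_top)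
    calc ∫⁻ ω, F (Wn n ω) * ∫⁻ y, g y ∂κ (ω n) ∂Pμ ≤ ∫⁻ _, 1 ∂Pμ :=
      lintegral_mono fun ω => mul_le_one' (hF1 _) (hk1 _)
    _ = 1 := by simp
  have hbF : ∃ C, ∀ v, |(F v).toReal| ≤ C := by
    refine ⟨1, fun v => ?_⟩
    rw [abs_of_nonneg ENNReal.toReal_nonneg]
    simpa using ENNReal.toReal_mono ENNReal.one_ne_top (hF1 v)
  have hbg : ∃ C, ∀ x, |(g x).toReal| ≤ C := by
    refine ⟨1, fun x => ?_⟩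
    rw [abs_of_nonneg ENNReal.toReal_nonneg]
    simpa using ENNReal.toReal_mono ENNReal.one_ne_top (hg1 x)
  have key := hM n (fun v => (F v).toReal) (fun x => (g x).toReal)
    (ENNReal.measurable_toReal.comp hF) (ENNReal.measurable_toReal.comp hg) hbF hbg
  have l1 : ∫ ω, (F (fun i => ω (i : ℕ))).toReal * (g (ω (n + 1))).toReal ∂Pμ =
      (∫⁻ ω, F (Wn n ω) * g (ω (n + 1)) ∂Pμ).toReal := by
    simp_rw [← ENNReal.toReal_mul]
    exact integral_toReal ((hFm.mul hgm).aemeasurable)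
      (ae_of_all _ fun ω => lt_of_le_of_lt (mul_le_one' (hF1 _) (hg1 _)) ENNReal.one_lt_top)
  have linner : ∀ x : X, ∫ y, (g y).toReal ∂κ x = (∫⁻ y, g y ∂κ x).toReal := fun x =>
    integral_toReal hg.aemeasurable (ae_of_all _ fun y => lt_of_le_of_lt (hg1 y) ENNReal.one_lt_top)
  have l2 : ∫ ω, (F (fun i => ω (i : ℕ))).toReal * ∫ y, (g y).toReal ∂κ (ω n) ∂Pμ =
      (∫⁻ ω, F (Wn n ω) * ∫⁻ y, g y ∂κ (ω n) ∂Pμ).toReal := by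
    simp_rw [linner, ← ENNReal.toReal_mul]
    exact integral_toReal ((hFm.mul hkm).aemeasurable)
      (ae_of_all _ fun ω => lt_of_le_of_lt (mul_le_one' (hF1 _) (hk1 _)) ENNReal.one_lt_top)
  rw [l1, l2] at key
  exact (ENNReal.toReal_eq_toReal_iff' hL hR).mp key

lemma indicator_le_one' {α : Type*} (s : Set α) (x : α) : s.indicator (1 : α → ℝ≥0∞) x ≤ 1 := by
  by_cases h : x ∈ s <;> simp [Set.indicator_apply, h]

lemma measurable_indicator_one {α : Type*} [MeasurableSpace α] {s : Set α}
    (hs : MeasurableSet s) : Measurable (s.indicator (1 : α → ℝ≥0∞)) :=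
  measurable_const.indicator hs

lemma one_step (hM : MarkovHyp κ Pμ) (k : ℕ) {H : (Fin (k + 2) → X) → ℝ≥0∞}
    (hH : Measurable H) :
    ∫⁻ ω, H (Wn (k + 1) ω) ∂Pμ =
      ∫⁻ ω, ∫⁻ y, H (Fin.snoc (Wn k ω) y) ∂κ (ω k) ∂Pμ := by
  classical
  have hg : Measurable fun p : (Fin (k + 1) → X) × (Fin (k + 1) → X) => p.2 (Fin.last k) :=
    (measurable_pi_apply _).comp measurable_snd
  set η : Kernel (Fin (k + 1) → X) (Fin (k + 2) → X) :=
    ((Kernel.deterministic (id : (Fin (k + 1) → X) → _) measurable_id ⊗ₖ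
      κ.comap (fun p : (Fin (k + 1) → X) × (Fin (k + 1) → X) => p.2 (Fin.last k)) hg).map
      (fun p : (Fin (k + 1) → X) × X => (Fin.snoc p.1 p.2 : Fin (k + 2) → X))) with hη
  haveI : IsMarkovKernel η := by
    rw [hη]; exact Kernel.IsMarkovKernel.map _ (measurable_snoc k)
  have hηa : ∀ (v : Fin (k + 1) → X) (f : (Fin (k + 2) → X) → ℝ≥0∞), Measurable f →
      ∫⁻ w, f w ∂η v = ∫⁻ y, f (Fin.snoc v y) ∂κ (v (Fin.last k)) := by
    intro v f hf
    rw [hη, Kernel.lintegral_map _ (measurable_snoc k) _ hf,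
      Kernel.lintegral_compProd _ _ _
        (f := fun p : (Fin (k + 1) → X) × X => f (Fin.snoc p.1 p.2))
        (hf.comp (measurable_snoc k))]
    rw [Kernel.lintegral_deterministic']
    · rfl
    · refine Measurable.lintegral_kernel_prod_right
        (κ := (κ.comap (fun p : (Fin (k + 1) → X) × (Fin (k + 1) → X) =>
          p.2 (Fin.last k)) hg).comap (fun b => (v, b)) measurable_prodMk_left) ?_
      exact (hf.comp (measurable_snoc k)).comp
        (measurable_fst.prodMk measurable_snd)
  have hWk1 := measurable_Wn (X := X) (k + 1)
  have hWk := measurable_Wn (X := X) k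
  set α : Measure (Fin (k + 2) → X) := Pμ.map (Wn (k + 1)) with hα
  set β : Measure (Fin (k + 2) → X) := (Pμ.map (Wn k)).bind (fun v => η v) with hβ
  have hab : α = β := by
    refine ext_of_generate_finite _ generateFrom_pi.symm isPiSystem_pi ?_ ?_
    · rintro _ ⟨t, ht, rfl⟩
      have htm : ∀ i, MeasurableSet (t i) := fun i => ht i (mem_univ i)
      have hbox : MeasurableSet (univ.pi t) := MeasurableSet.univ_pi htm
      set S' : Set (Fin (k + 1) → X) := univ.pi fun i : Fin (k + 1) => t i.castSucc with hS'
      have hS'm : MeasurableSet S' := MeasurableSet.univ_pi fun i => htm _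
      have hsplit : ∀ (v : Fin (k + 1) → X) (y : X),
          (univ.pi t).indicator (1 : (Fin (k + 2) → X) → ℝ≥0∞) (Fin.snoc v y) =
            S'.indicator 1 v * (t (Fin.last (k + 1))).indicator 1 y := by
        intro v y
        have hmem : (Fin.snoc v y : Fin (k + 2) → X) ∈ univ.pi t ↔
            v ∈ S' ∧ y ∈ t (Fin.last (k + 1)) := by
          rw [Set.mem_pi]
          rw [show (∀ i ∈ univ, (Fin.snoc v y : Fin (k + 2) → X) i ∈ t i) ↔
              ∀ i, (Fin.snoc v y : Fin (k + 2) → X) i ∈ t i from by simp]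
          rw [forall_last_iff fun j => (Fin.snoc v y : Fin (k + 2) → X) j ∈ t j]
          simp only [Fin.snoc_castSucc, Fin.snoc_last, hS', Set.mem_pi, mem_univ,
            forall_true_left]
        by_cases h1 : v ∈ S' <;> by_cases h2 : y ∈ t (Fin.last (k + 1)) <;>
          simp [Set.indicator_apply, h1, h2, hmem]
      have hpre : Wn (k + 1) ⁻¹' (univ.pi t) =
          (Wn k ⁻¹' S') ∩ ((fun ω : ℕ → X => ω (k + 1)) ⁻¹' (t (Fin.last (k + 1)))) := by
        ext ω
        simp only [Set.mem_preimage, Set.mem_pi, mem_univ, forall_true_left, Set.mem_inter_iff]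
        rw [forall_last_iff fun j => Wn (k + 1) ω j ∈ t j]
        constructor
        · rintro ⟨h1, h2⟩
          exact ⟨fun i _ => h1 i, h2⟩
        · rintro ⟨h1, h2⟩
          exact ⟨fun i => h1 i (mem_univ i), h2⟩
      have hαval : α (univ.pi t) = ∫⁻ ω, S'.indicator 1 (Wn k ω) *
          κ (ω k) (t (Fin.last (k + 1))) ∂Pμ := by
        rw [hα, Measure.map_apply hWk1 hbox, hpre,
          measure_inter_lintegral Pμ (hWk hS'm) ((measurable_pi_apply _) (htm _))]
        have := markovL κ Pμ hM k (F := S'.indicator 1)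
          (g := (t (Fin.last (k + 1))).indicator 1)
          (measurable_indicator_one hS'm) (measurable_indicator_one (htm _))
          (indicator_le_one' _) (indicator_le_one' _)
        rw [show (∫⁻ ω, (Wn k ⁻¹' S').indicator 1 ω *
            ((fun ω : ℕ → X => ω (k + 1)) ⁻¹' t (Fin.last (k + 1))).indicator 1 ω ∂Pμ) =
            ∫⁻ ω, S'.indicator 1 (Wn k ω) *
            (t (Fin.last (k + 1))).indicator 1 (ω (k + 1)) ∂Pμ from
          lintegral_congr fun ω => by rw [indc, indc]]
        rw [this]
        refine lintegral_congr fun ω => ?_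
        rw [lintegral_indicator_one (htm _)]
      have hβval : β (univ.pi t) = ∫⁻ ω, S'.indicator 1 (Wn k ω) *
          κ (ω k) (t (Fin.last (k + 1))) ∂Pμ := by
        rw [hβ, Measure.bind_apply hbox (Kernel.measurable η).aemeasurable]
        have hval : ∀ v : Fin (k + 1) → X, η v (univ.pi t) =
            S'.indicator 1 v * κ (v (Fin.last k)) (t (Fin.last (k + 1))) := by
          intro v
          rw [← lintegral_indicator_one hbox, hηa v _ (measurable_indicator_one hbox)]
          simp_rw [hsplit v]
          rw [lintegral_const_mul' _ _ (by
            exact ne_of_lt (lt_of_le_of_lt (indicator_le_one' _ _) ENNReal.one_lt_top)),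
            lintegral_indicator_one (htm _)]
        simp_rw [hval]
        rw [lintegral_map (show Measurable fun v : Fin (k + 1) → X =>
          S'.indicator 1 v * κ (v (Fin.last k)) (t (Fin.last (k + 1))) from
          (measurable_indicator_one hS'm).mul
            ((κ.measurable_coe (htm _)).comp (measurable_pi_apply (Fin.last k)))) hWk]
        rfl
      rw [hαval, hβval]
    · haveI : IsProbabilityMeasure α := by
        rw [hα]; exact Measure.isProbabilityMeasure_map hWk1.aemeasurable
      haveI : IsProbabilityMeasure (Pμ.map (Wn k)) := Measure.isProbabilityMeasure_map hWk.aemeasurable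
      rw [hα, hβ, Measure.bind_apply MeasurableSet.univ (Kernel.measurable η).aemeasurable]
      simp [measure_univ]
  calc ∫⁻ ω, H (Wn (k + 1) ω) ∂Pμ = ∫⁻ w, H w ∂α := (lintegral_map hH hWk1).symm
    _ = ∫⁻ w, H w ∂β := by rw [hab]
    _ = ∫⁻ v, ∫⁻ w, H w ∂η v ∂(Pμ.map (Wn k)) :=
        Measure.lintegral_bind (Kernel.measurable η).aemeasurable hH.aemeasurable
    _ = ∫⁻ v, ∫⁻ y, H (Fin.snoc v y) ∂κ (v (Fin.last k)) ∂(Pμ.map (Wn k)) :=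
        lintegral_congr fun v => hηa v H hH
    _ = ∫⁻ ω, ∫⁻ y, H (Fin.snoc (Wn k ω) y) ∂κ ((Wn k ω) (Fin.last k)) ∂Pμ :=
        lintegral_map (measurable_smooth κ hH) hWk
    _ = ∫⁻ ω, ∫⁻ y, H (Fin.snoc (Wn k ω) y) ∂κ (ω k) ∂Pμ := rfl

lemma fut (hM : MarkovHyp κ Pμ) :
    ∀ (m n : ℕ) (f : (Fin (n + 1) → X) → ℝ≥0∞) (G : (Fin (m + 1) → X) → ℝ≥0∞),
      Measurable f → (∀ v, f v ≤ 1) → Measurable G →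
      ∫⁻ ω, f (Wn n ω) * G (Wn m (Th n ω)) ∂Pμ = ∫⁻ ω, f (Wn n ω) * Tm κ m G (ω n) ∂Pμ
  | 0, n, f, G, hf, hf1, hG => by
      refine lintegral_congr fun ω => ?_
      congr 2
      funext i
      have hi : (i : ℕ) = 0 := by omega
      show ω (n + (i : ℕ)) = ω n
      rw [hi]
      rfl
  | m + 1, n, f, G, hf, hf1, hG => by
      set H : (Fin (n + m + 2) → X) → ℝ≥0∞ := fun w =>
        f (fun i => w ⟨(i : ℕ), by omega⟩) *
          G (fun i : Fin (m + 2) => w ⟨n + (i : ℕ), by omega⟩) with hHdef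
      have hHm : Measurable H := by
        refine Measurable.mul ?_ ?_
        · exact hf.comp (measurable_pi_lambda _ fun _ => measurable_pi_apply _)
        · exact hG.comp (measurable_pi_lambda _ fun _ => measurable_pi_apply _)
      have e1 : ∫⁻ ω, f (Wn n ω) * G (Wn (m + 1) (Th n ω)) ∂Pμ =
          ∫⁻ ω, H (Wn (n + m + 1) ω) ∂Pμ := rfl
      set G1 : (Fin (m + 1) → X) → ℝ≥0∞ :=
        fun v => ∫⁻ y, G (Fin.snoc v y) ∂κ (v (Fin.last m)) with hG1def
      have hG1m : Measurable G1 := measurable_smooth κ hG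
      have e2 : ∀ (ω : ℕ → X) (y : X), H (Fin.snoc (Wn (n + m) ω) y) =
          f (Wn n ω) * G (Fin.snoc (Wn m (Th n ω)) y) := by
        intro ω y
        rw [hHdef]
        dsimp only
        congr 1
        · congr 1
          funext i
          exact snoc_lt (Wn (n + m) ω) y ⟨(i : ℕ), by omega⟩ (by omega : ((i : ℕ) : ℕ) < n + m + 1)
        · congr 1
          funext i
          induction i using Fin.lastCases with
          | last =>
              rw [Fin.snoc_last]
              exact snoc_last' (Wn (n + m) ω) y _ (by simp only [Fin.val_last]; omega)
          | cast j =>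
              rw [Fin.snoc_castSucc]
              have : (↑(Fin.castSucc j) : ℕ) = (j : ℕ) := rfl
              refine (snoc_lt (Wn (n + m) ω) y ⟨n + (↑(Fin.castSucc j) : ℕ), by omega⟩
                (by simp only [this]; omega)).trans ?_
              rfl
      calc ∫⁻ ω, f (Wn n ω) * G (Wn (m + 1) (Th n ω)) ∂Pμ
          = ∫⁻ ω, H (Wn (n + m + 1) ω) ∂Pμ := e1
        _ = ∫⁻ ω, ∫⁻ y, H (Fin.snoc (Wn (n + m) ω) y) ∂κ (ω (n + m)) ∂Pμ :=
            one_step κ Pμ hM (n + m) hHm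
        _ = ∫⁻ ω, f (Wn n ω) * G1 (Wn m (Th n ω)) ∂Pμ := by
            refine lintegral_congr fun ω => ?_
            simp_rw [e2 ω]
            rw [lintegral_const_mul' _ _
              (ne_of_lt (lt_of_le_of_lt (hf1 _) ENNReal.one_lt_top))]
            rfl
        _ = ∫⁻ ω, f (Wn n ω) * Tm κ m G1 (ω n) ∂Pμ := fut hM m n f G1 hf hf1 hG1m
        _ = ∫⁻ ω, f (Wn n ω) * Tm κ (m + 1) G (ω n) ∂Pμ := rfl

variable (μ : Measure X) [IsProbabilityMeasure μ]

lemma lawn (h0 : Pμ.map (fun ω => ω 0) = μ) (hinv : μ.bind (fun x => κ x) = μ)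
    (hM : MarkovHyp κ Pμ) : ∀ n : ℕ, Pμ.map (fun ω => ω n) = μ := by
  intro n
  induction n with
  | zero => exact h0
  | succ n ih =>
    ext B hB
    rw [Measure.map_apply (measurable_pi_apply _) hB]
    have hml := markovL κ Pμ hM n (F := fun _ => (1 : ℝ≥0∞)) (g := B.indicator 1)
      measurable_const (measurable_indicator_one hB) (fun _ => le_refl 1)
      (indicator_le_one' _)
    simp only [one_mul] at hml
    have l1 : ∫⁻ ω, B.indicator 1 (ω (n + 1)) ∂Pμ = Pμ ((fun ω : ℕ → X => ω (n + 1)) ⁻¹' B) := by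
      rw [← lintegral_indicator_one ((measurable_pi_apply (n + 1)) hB)]
      exact lintegral_congr fun ω => (indc (fun ω : ℕ → X => ω (n + 1)) B ω).symm
    have l2 : ∫⁻ ω, ∫⁻ y, B.indicator 1 y ∂κ (ω n) ∂Pμ = μ B := by
      simp_rw [lintegral_indicator_one hB]
      rw [show (fun ω : ℕ → X => κ (ω n) B) = fun ω : ℕ → X => ((fun x => κ x B) (ω n)) from rfl]
      rw [← lintegral_map (κ.measurable_coe hB) (measurable_pi_apply n), ih,
        ← Measure.bind_apply hB κ.measurable.aemeasurable, hinv]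
    rw [← l1, hml, l2]

lemma cylrep {t : Set (ℕ → X)} (ht : t ∈ measurableCylinders fun _ : ℕ => X) :
    ∃ (N : ℕ) (C : Set (Fin (N + 1) → X)), MeasurableSet C ∧ t = Wn N ⁻¹' C := by
  obtain ⟨s, S, hS, rfl⟩ := (mem_measurableCylinders t).mp ht
  set N := s.sup id with hN
  have hmem : ∀ i : s, (i : ℕ) < N + 1 := fun i =>
    Nat.lt_succ_of_le (Finset.le_sup (f := id) i.2)
  refine ⟨N, (fun (v : Fin (N + 1) → X) (i : s) => v ⟨(i : ℕ), hmem i⟩) ⁻¹' S,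
    (measurable_pi_lambda _ fun i => measurable_pi_apply _) hS, ?_⟩
  ext ω
  simp only [cylinder, Set.mem_preimage]
  exact Iff.rfl

lemma cyln (h0 : Pμ.map (fun ω => ω 0) = μ) (hinv : μ.bind (fun x => κ x) = μ)
    (hM : MarkovHyp κ Pμ) (n N : ℕ) {C : Set (Fin (N + 1) → X)} (hC : MeasurableSet C) :
    Pμ ((fun ω => Wn N (Th n ω)) ⁻¹' C) = ∫⁻ x, Tm κ N (C.indicator 1) x ∂μ := by
  have h := fut κ Pμ hM N n (fun _ => (1 : ℝ≥0∞)) (C.indicator 1) measurable_const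
    (fun _ => le_refl 1) (measurable_indicator_one hC)
  simp only [one_mul] at h
  have l1 : ∫⁻ ω, C.indicator 1 (Wn N (Th n ω)) ∂Pμ =
      Pμ ((fun ω => Wn N (Th n ω)) ⁻¹' C) := by
    rw [← lintegral_indicator_one (show MeasurableSet ((fun ω => Wn N (Th n ω)) ⁻¹' C) from
      ((measurable_Wn N).comp (measurable_Th n)) hC)]
    exact lintegral_congr fun ω => (indc (fun ω => Wn N (Th n ω)) C ω).symm
  have l2 : ∫⁻ ω, Tm κ N (C.indicator 1) (ω n) ∂Pμ = ∫⁻ x, Tm κ N (C.indicator 1) x ∂μ := by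
    rw [← lawn κ Pμ μ h0 hinv hM n,
      lintegral_map (measurable_Tm κ N _ (measurable_indicator_one hC)) (measurable_pi_apply n)]
  rw [← l1, h, l2]

lemma si (h0 : Pμ.map (fun ω => ω 0) = μ) (hinv : μ.bind (fun x => κ x) = μ)
    (hM : MarkovHyp κ Pμ) : Pμ.map (fun ω (k : ℕ) => ω (k + 1)) = Pμ := by
  have hshf : Measurable (fun ω (k : ℕ) => ω (k + 1) : (ℕ → X) → ℕ → X) :=
    measurable_pi_lambda _ fun _ => measurable_pi_apply _
  haveI : IsProbabilityMeasure (Pμ.map (fun ω (k : ℕ) => ω (k + 1))) :=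
    Measure.isProbabilityMeasure_map hshf.aemeasurable
  refine ext_of_generate_finite _ generateFrom_measurableCylinders.symm
    isPiSystem_measurableCylinders ?_ (by simp [measure_univ])
  intro t ht
  obtain ⟨N, C, hC, rfl⟩ := cylrep ht
  rw [Measure.map_apply hshf ((measurable_Wn N) hC)]
  have e1 : (fun ω (k : ℕ) => ω (k + 1)) ⁻¹' (Wn N ⁻¹' C) =
      (fun ω => Wn N (Th 1 ω)) ⁻¹' C := by
    ext ω
    simp only [Set.mem_preimage]
    rw [show Wn N (fun k => ω (k + 1)) = Wn N (Th 1 ω) from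
      funext fun i => congrArg ω (Nat.add_comm _ _)]
  have e0 : Wn N ⁻¹' C = (fun ω => Wn N (Th 0 ω)) ⁻¹' C := by
    ext ω
    simp only [Set.mem_preimage]
    rw [show Wn N ω = Wn N (Th 0 ω) from funext fun i => congrArg ω (Nat.zero_add _).symm]
  rw [e1, e0, cyln κ Pμ μ h0 hinv hM 1 N hC, cyln κ Pμ μ h0 hinv hM 0 N hC]

end StationaryShiftAux

open StationaryShiftAux in
/-- Ergodicity of the stationary Markov shift when bounded harmonic functions are trivial.
The stationary path measure `Pμ` on `X^ℕ` is characterized by its initial distribution `μ`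
(the law of the coordinate `ω 0`) and the Markov property with one-step transition kernel
`κ` (this pins down `Pμ` as the Ionescu–Tulcea stationary chain law `∫ P_x μ(dx)`).
If every bounded measurable `κ`-harmonic function is `μ`-a.e. constant, then the one-sided
shift preserves `Pμ` and is ergodic. -/
theorem stationary_markov_shift_ergodic_of_trivial_harmonic
    {X : Type*} [MeasurableSpace X]
    (κ : Kernel X X) [IsMarkovKernel κ]
    (μ : Measure X) [IsProbabilityMeasure μ]
    (hinv : μ.bind (fun x => κ x) = μ)
    (Pμ : Measure (ℕ → X)) [IsProbabilityMeasure Pμ]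
    (h0 : Pμ.map (fun ω => ω 0) = μ)
    (hMarkov : ∀ (n : ℕ) (F : (Fin (n + 1) → X) → ℝ) (g : X → ℝ),
      Measurable F → Measurable g →
      (∃ C, ∀ v, |F v| ≤ C) → (∃ C, ∀ x, |g x| ≤ C) →
      ∫ ω, F (fun i => ω (i : ℕ)) * g (ω (n + 1)) ∂Pμ =
        ∫ ω, F (fun i => ω (i : ℕ)) * ∫ y, g y ∂(κ (ω n)) ∂Pμ)
    (hharm : ∀ h : X → ℝ, Measurable h → (∃ C, ∀ x, |h x| ≤ C) →
      (∀ᵐ x ∂μ, ∫ y, h y ∂(κ x) = h x) → ∃ a : ℝ, ∀ᵐ x ∂μ, h x = a) :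
    Pμ.map (fun ω n => ω (n + 1)) = Pμ ∧
      ∀ A : Set (ℕ → X), MeasurableSet A →
        (fun ω n => ω (n + 1)) ⁻¹' A = A → Pμ A = 0 ∨ Pμ A = 1 := by
  have hM : MarkovHyp κ Pμ := hMarkov
  refine ⟨si κ Pμ μ h0 hinv hM, ?_⟩
  intro A hAmeas hAinv
  by_cases hA0 : Pμ A = 0
  · exact Or.inl hA0
  right
  have hshf : Measurable (fun ω (n : ℕ) => ω (n + 1) : (ℕ → X) → ℕ → X) :=
    measurable_pi_lambda _ fun _ => measurable_pi_apply _
  have hev : ∀ n : ℕ, Measurable fun ω : ℕ → X => ω n := fun n => measurable_pi_apply n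
  have hSI : Pμ.map (fun ω (n : ℕ) => ω (n + 1)) = Pμ := si κ Pμ μ h0 hinv hM
  have hres : (Pμ.restrict A).map (fun ω (n : ℕ) => ω (n + 1)) = Pμ.restrict A := by
    ext s hs
    rw [Measure.map_apply hshf hs, Measure.restrict_apply (hshf hs),
      Measure.restrict_apply hs]
    conv_lhs => rw [← hAinv]
    rw [← Set.preimage_inter, ← Measure.map_apply hshf (hs.inter hAmeas), hSI]
  have hstat : ∀ n : ℕ, (Pμ.restrict A).map (fun ω => ω n) =
      (Pμ.restrict A).map (fun ω => ω 0) := by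
    intro n
    induction n with
    | zero => rfl
    | succ n ih =>
      have e : (fun ω : ℕ → X => ω (n + 1)) =
          (fun ω : ℕ → X => ω n) ∘ (fun ω (k : ℕ) => ω (k + 1)) := rfl
      rw [e, ← Measure.map_map (hev n) hshf, hres, ih]
  set ν : Measure X := (Pμ.restrict A).map (fun ω => ω 0) with hνdef
  haveI : IsFiniteMeasure ν := by rw [hνdef]; infer_instance
  have hν_le : ν ≤ μ := by
    rw [hνdef, ← h0]
    exact Measure.map_mono Measure.restrict_le_self (hev 0)
  have hνac : ν ≪ μ := hν_le.absolutelyContinuous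
  set hden : X → ℝ≥0∞ := ν.rnDeriv μ with hdendef
  have hden_meas : Measurable hden := Measure.measurable_rnDeriv ν μ
  have hν_eq : μ.withDensity hden = ν := Measure.withDensity_rnDeriv_eq ν μ hνac
  have hν_apply : ∀ B : Set X, MeasurableSet B →
      ν B = Pμ ((fun ω : ℕ → X => ω 0) ⁻¹' B ∩ A) := by
    intro B hB
    rw [hνdef, Measure.map_apply (hev 0) hB, Measure.restrict_apply ((hev 0) hB)]
  have hThshf : ∀ n : ℕ, Th (X := X) n ∘ (fun ω (k : ℕ) => ω (k + 1)) = Th (n + 1) :=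
    fun n => funext fun ω => funext fun k => congrArg ω (by omega)
  have hThInv : ∀ n : ℕ, Th n ⁻¹' A = A := by
    intro n
    induction n with
    | zero =>
      have e : Th (X := X) 0 = id := funext fun ω => funext fun k => congrArg ω (Nat.zero_add k)
      rw [e, Set.preimage_id]
    | succ n ih =>
      rw [← hThshf n, Set.preimage_comp, ih, hAinv]
  -- the key identity
  have key : ∀ (n : ℕ) (S : Set (Fin (n + 1) → X)), MeasurableSet S →
      ∃ ψ : X → ℝ≥0∞, Measurable ψ ∧
        (∫⁻ x, ψ x ∂μ = Pμ (Wn n ⁻¹' S)) ∧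
        (∀ φ : X → ℝ≥0∞, Measurable φ →
          ∫⁻ ω, S.indicator 1 (Wn n ω) * φ (ω n) ∂Pμ = ∫⁻ x, ψ x * φ x ∂μ) ∧
        Pμ (Wn n ⁻¹' S ∩ A) = ∫⁻ x, ψ x * hden x ∂μ := by
    intro n S hS
    have hPS : MeasurableSet (Wn n ⁻¹' S) := (measurable_Wn n) hS
    set ρ : Measure X := (Pμ.restrict (Wn n ⁻¹' S)).map (fun ω => ω n) with hρdef
    haveI : IsFiniteMeasure ρ := by rw [hρdef]; infer_instance
    have hρ_le : ρ ≤ μ := by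
      rw [hρdef, ← lawn κ Pμ μ h0 hinv hM n]
      exact Measure.map_mono Measure.restrict_le_self (hev n)
    set ψ0 := ρ.rnDeriv μ with hψ0def
    have hψ0m : Measurable ψ0 := Measure.measurable_rnDeriv ρ μ
    set ψ : X → ℝ≥0∞ := fun x => min (ψ0 x) 1 with hψdef
    have hψm : Measurable ψ := hψ0m.min measurable_const
    have hψ1 : ∀ x, ψ x ≤ 1 := fun x => min_le_right _ _
    have hψae : ψ =ᵐ[μ] ψ0 := (Measure.rnDeriv_le_one_of_le hρ_le).mono fun x hx => by
      rw [hψdef]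
      exact min_eq_left hx
    have hρ_eq : μ.withDensity ψ0 = ρ :=
      Measure.withDensity_rnDeriv_eq ρ μ hρ_le.absolutelyContinuous
    have hmass : ∫⁻ x, ψ x ∂μ = Pμ (Wn n ⁻¹' S) := by
      rw [lintegral_congr_ae hψae, ← setLIntegral_univ, ← withDensity_apply _ MeasurableSet.univ,
        hρ_eq, hρdef, Measure.map_apply (hev n) MeasurableSet.univ, Set.preimage_univ,
        Measure.restrict_apply MeasurableSet.univ, Set.univ_inter]
    have hi : ∀ φ : X → ℝ≥0∞, Measurable φ →
        ∫⁻ ω, S.indicator 1 (Wn n ω) * φ (ω n) ∂Pμ = ∫⁻ x, ψ x * φ x ∂μ := by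
      intro φ hφ
      have e1 : ∫⁻ ω, S.indicator 1 (Wn n ω) * φ (ω n) ∂Pμ
          = ∫⁻ ω in Wn n ⁻¹' S, φ (ω n) ∂Pμ := by
        rw [← lintegral_indicator_mul Pμ hPS]
        exact lintegral_congr fun ω => by rw [indc (Wn n) S ω]
      have e2 : ∫⁻ ω in Wn n ⁻¹' S, φ (ω n) ∂Pμ = ∫⁻ x, φ x ∂ρ := by
        rw [hρdef, lintegral_map hφ (hev n)]
      rw [e1, e2, ← hρ_eq, lintegral_withDensity_eq_lintegral_mul μ hψ0m hφ]
      refine lintegral_congr_ae ?_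
      filter_upwards [hψae] with x hx
      simp only [Pi.mul_apply]
      rw [hx]
    have hii : ∀ φ : X → ℝ≥0∞, Measurable φ →
        ∫⁻ ω, ψ (ω n) * φ (ω n) ∂Pμ = ∫⁻ x, ψ x * φ x ∂μ := by
      intro φ hφ
      rw [← lawn κ Pμ μ h0 hinv hM n,
        lintegral_map (show Measurable fun x => ψ x * φ x from hψm.mul hφ) (hev n)]
    set αm : Measure (ℕ → X) := (Pμ.restrict (Wn n ⁻¹' S)).map (Th n) with hαmdef
    set γm : Measure (ℕ → X) := (Pμ.withDensity (fun ω => ψ (ω n))).map (Th n) with hγmdef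
    haveI : IsFiniteMeasure αm := by rw [hαmdef]; infer_instance
    have hag : αm = γm := by
      refine ext_of_generate_finite _ generateFrom_measurableCylinders.symm
        isPiSystem_measurableCylinders ?_ ?_
      · intro t ht
        obtain ⟨N, C, hC, rfl⟩ := cylrep ht
        have hpre : Th (X := X) n ⁻¹' (Wn N ⁻¹' C) = (fun ω => Wn N (Th n ω)) ⁻¹' C := rfl
        have hpm : MeasurableSet ((fun ω => Wn N (Th n ω)) ⁻¹' C) :=
          ((measurable_Wn N).comp (measurable_Th n)) hC
        have hTmm : Measurable (Tm κ N (C.indicator 1)) :=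
          measurable_Tm κ N _ (measurable_indicator_one hC)
        have hα : αm (Wn N ⁻¹' C) = ∫⁻ x, ψ x * Tm κ N (C.indicator 1) x ∂μ := by
          rw [hαmdef, Measure.map_apply (measurable_Th n) ((measurable_Wn N) hC), hpre,
            Measure.restrict_apply hpm, measure_inter_lintegral Pμ hpm hPS]
          have e : ∀ ω : ℕ → X, ((fun ω => Wn N (Th n ω)) ⁻¹' C).indicator 1 ω *
              ((Wn n ⁻¹' S).indicator 1 ω : ℝ≥0∞) =
              S.indicator 1 (Wn n ω) * C.indicator 1 (Wn N (Th n ω)) := by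
            intro ω
            rw [indc (fun ω => Wn N (Th n ω)) C ω, indc (Wn n) S ω, mul_comm]
          rw [lintegral_congr e,
            fut κ Pμ hM N n (S.indicator 1) (C.indicator 1)
              (measurable_indicator_one hS) (indicator_le_one' _) (measurable_indicator_one hC)]
          exact hi _ hTmm
        have hγ : γm (Wn N ⁻¹' C) = ∫⁻ x, ψ x * Tm κ N (C.indicator 1) x ∂μ := by
          rw [hγmdef, Measure.map_apply (measurable_Th n) ((measurable_Wn N) hC), hpre,
            withDensity_apply _ hpm, ← lintegral_indicator_mul Pμ hpm]
          have e : ∀ ω : ℕ → X, ((fun ω => Wn N (Th n ω)) ⁻¹' C).indicator 1 ω * ψ (ω n) =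
              (fun v : Fin (n + 1) → X => ψ (v (Fin.last n))) (Wn n ω) *
                C.indicator 1 (Wn N (Th n ω)) := by
            intro ω
            rw [indc (fun ω => Wn N (Th n ω)) C ω, mul_comm]
            rfl
          rw [lintegral_congr e,
            fut κ Pμ hM N n (fun v => ψ (v (Fin.last n))) (C.indicator 1)
              (hψm.comp (measurable_pi_apply _)) (fun v => hψ1 _)
              (measurable_indicator_one hC)]
          exact hii _ hTmm
        rw [hα, hγ]
      · have h1 : αm Set.univ = Pμ (Wn n ⁻¹' S) := by
          rw [hαmdef, Measure.map_apply (measurable_Th n) MeasurableSet.univ, Set.preimage_univ,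
            Measure.restrict_apply MeasurableSet.univ, Set.univ_inter]
        have h2 : γm Set.univ = Pμ (Wn n ⁻¹' S) := by
          rw [hγmdef, Measure.map_apply (measurable_Th n) MeasurableSet.univ, Set.preimage_univ,
            withDensity_apply _ MeasurableSet.univ, setLIntegral_univ]
          have h3 := hii (fun _ => 1) measurable_const
          simp only [mul_one] at h3
          rw [h3, hmass]
        rw [h1, h2]
    have hfin : Pμ (Wn n ⁻¹' S ∩ A) = ∫⁻ x, ψ x * hden x ∂μ := by
      have h1 : αm A = Pμ (Wn n ⁻¹' S ∩ A) := by
        rw [hαmdef, Measure.map_apply (measurable_Th n) hAmeas, hThInv n,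
          Measure.restrict_apply hAmeas, Set.inter_comm]
      have h2 : γm A = ∫⁻ x, ψ x * hden x ∂μ := by
        rw [hγmdef, Measure.map_apply (measurable_Th n) hAmeas, hThInv n,
          withDensity_apply _ hAmeas,
          show (∫⁻ ω in A, ψ (ω n) ∂Pμ) = ∫⁻ x, ψ x ∂((Pμ.restrict A).map (fun ω => ω n)) from
            (lintegral_map hψm (hev n)).symm,
          hstat n, ← hν_eq, lintegral_withDensity_eq_lintegral_mul μ hden_meas hψm]
        exact lintegral_congr fun x => mul_comm _ _
      rw [← h1, hag, h2]
    exact ⟨ψ, hψm, hmass, hi, hfin⟩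
  -- the harmonic function
  set hH : X → ℝ≥0∞ := fun x => min (hden x) 1 with hHdef
  have hHm : Measurable hH := hden_meas.min measurable_const
  have hH1 : ∀ x, hH x ≤ 1 := fun x => min_le_right _ _
  have hHae : hH =ᵐ[μ] hden := (Measure.rnDeriv_le_one_of_le hν_le).mono fun x hx => by
    rw [hHdef]
    exact min_eq_left hx
  have hκm : Measurable fun x => ∫⁻ y, hH y ∂κ x := Measurable.lintegral_kernel (κ := κ) hHm
  have hharm_lint : ∀ B : Set X, MeasurableSet B →
      ∫⁻ x in B, (∫⁻ y, hH y ∂κ x) ∂μ = ∫⁻ x in B, hH x ∂μ := by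
    intro B hB
    have hrhs : ∫⁻ x in B, hH x ∂μ = ν B := by
      rw [show (∫⁻ x in B, hH x ∂μ) = ∫⁻ x in B, hden x ∂μ from
          lintegral_congr_ae (ae_restrict_of_ae (hHae.mono fun x hx => hx)),
        ← withDensity_apply _ hB, hν_eq]
    obtain ⟨ψ, hψm, hmass, hi, hfin⟩ := key 1 ((fun v : Fin 2 → X => v 0) ⁻¹' B)
      ((measurable_pi_apply (0 : Fin 2)) hB)
    have l0 : ∫⁻ x in B, (∫⁻ y, hH y ∂κ x) ∂μ =
        ∫⁻ ω, B.indicator 1 (ω 0) * (∫⁻ y, hH y ∂κ (ω 0)) ∂Pμ := by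
      rw [← lintegral_indicator_mul μ hB, ← h0,
        lintegral_map (show Measurable fun x : X => B.indicator 1 x * ∫⁻ y, hH y ∂κ x from
          (measurable_indicator_one hB).mul hκm) (hev 0)]
    have eT : ∀ x : X, Tm κ 1 (fun v : Fin 2 → X => hH (v 1)) x = ∫⁻ y, hH y ∂κ x := by
      intro x
      show (∫⁻ y, hH ((Fin.snoc (fun _ : Fin 1 => x) y : Fin 2 → X) 1) ∂κ
        ((fun _ : Fin 1 => x) (Fin.last 0))) = ∫⁻ y, hH y ∂κ x
      exact lintegral_congr fun y => congrArg hH (snoc_last' _ _ _ rfl)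
    have l1 : ∫⁻ ω, B.indicator 1 (ω 0) * (∫⁻ y, hH y ∂κ (ω 0)) ∂Pμ =
        ∫⁻ ω, B.indicator 1 (ω 0) * hH (ω 1) ∂Pμ := by
      have hfut := fut κ Pμ hM 1 0 (fun v : Fin 1 → X => B.indicator 1 (v 0))
        (fun v : Fin 2 → X => hH (v 1))
        ((measurable_indicator_one hB).comp (measurable_pi_apply 0))
        (fun v => indicator_le_one' _ _)
        (hHm.comp (measurable_pi_apply 1))
      rw [show (∫⁻ ω, B.indicator 1 (ω 0) * (∫⁻ y, hH y ∂κ (ω 0)) ∂Pμ) =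
          ∫⁻ ω, B.indicator 1 (ω 0) * Tm κ 1 (fun v : Fin 2 → X => hH (v 1)) (ω 0) ∂Pμ from
        lintegral_congr fun ω => by rw [eT]]
      exact hfut.symm
    have l2 : ∫⁻ ω, B.indicator 1 (ω 0) * hH (ω 1) ∂Pμ = ν B := by
      have e : ∀ ω : ℕ → X, (B.indicator 1 (ω 0) : ℝ≥0∞) * hH (ω 1) =
          ((fun v : Fin 2 → X => v 0) ⁻¹' B).indicator 1 (Wn 1 ω) * hH (ω 1) := by
        intro ω
        rw [indc (fun v : Fin 2 → X => v 0) B (Wn 1 ω)]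
        rfl
      rw [lintegral_congr e, hi hH hHm,
        show (∫⁻ x, ψ x * hH x ∂μ) = ∫⁻ x, ψ x * hden x ∂μ from
          lintegral_congr_ae (hHae.mono fun x hx => congrArg (HMul.hMul (ψ x)) hx),
        ← hfin, hν_apply B hB]
      rfl
    rw [l0, l1, l2, hrhs]
  have hae_harm : (fun x => ∫⁻ y, hH y ∂κ x) =ᵐ[μ] hH :=
    ae_eq_of_forall_setLIntegral_eq_of_sigmaFinite hκm hHm fun s hs _ => hharm_lint s hs
  have hRharm : ∀ᵐ x ∂μ, ∫ y, (hH y).toReal ∂κ x = (hH x).toReal := by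
    filter_upwards [hae_harm] with x hx
    rw [integral_toReal hHm.aemeasurable (ae_of_all _ fun y =>
      lt_of_le_of_lt (hH1 y) ENNReal.one_lt_top), hx]
  obtain ⟨a, ha⟩ := hharm (fun x => (hH x).toReal) (ENNReal.measurable_toReal.comp hHm)
    ⟨1, fun x => by
      rw [abs_of_nonneg ENNReal.toReal_nonneg]
      simpa using ENNReal.toReal_mono ENNReal.one_ne_top (hH1 x)⟩ hRharm
  set c := ENNReal.ofReal a with hcdef
  have hc : hden =ᵐ[μ] fun _ => c := by
    filter_upwards [ha, hHae] with x h1 h2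
    rw [← h2, ← ENNReal.ofReal_toReal (ne_of_lt (lt_of_le_of_lt (hH1 x) ENNReal.one_lt_top)), h1]
  have hcA : c = Pμ A := by
    have h1 : ∫⁻ x, hden x ∂μ = ν Set.univ := by
      rw [← setLIntegral_univ, ← withDensity_apply _ MeasurableSet.univ, hν_eq]
    have h2 : ν Set.univ = Pμ A := by
      rw [hν_apply Set.univ MeasurableSet.univ, Set.preimage_univ, Set.univ_inter]
    have h3 : ∫⁻ x, hden x ∂μ = c := by
      rw [lintegral_congr_ae hc, lintegral_const, measure_univ, mul_one]
    rw [← h3, h1, h2]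
  have hmain : Pμ.restrict A = c • Pμ := by
    refine ext_of_generate_finite _ generateFrom_measurableCylinders.symm
      isPiSystem_measurableCylinders ?_ ?_
    · intro t ht
      obtain ⟨N, C, hC, rfl⟩ := cylrep ht
      obtain ⟨ψ, hψm, hmass, hi, hfin⟩ := key N C hC
      rw [Measure.restrict_apply ((measurable_Wn N) hC), hfin,
        show (∫⁻ x, ψ x * hden x ∂μ) = ∫⁻ x, ψ x * c ∂μ from
          lintegral_congr_ae (hc.mono fun x hx => congrArg (HMul.hMul (ψ x)) hx),
        lintegral_mul_const' c _ (by rw [hcA]; exact measure_ne_top Pμ A), hmass,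
        Measure.smul_apply, smul_eq_mul, mul_comm]
    · rw [Measure.restrict_apply MeasurableSet.univ, Set.univ_inter, Measure.smul_apply,
        smul_eq_mul, measure_univ, mul_one, hcA]
  have hcomp : Pμ Aᶜ = 0 := by
    have h1 : (Pμ.restrict A) Aᶜ = 0 := by
      rw [Measure.restrict_apply hAmeas.compl, Set.compl_inter_self, measure_empty]
    rw [hmain, Measure.smul_apply, smul_eq_mul] at h1
    rcases mul_eq_zero.mp h1 with h | h
    · exact absurd (hcA ▸ h) hA0
    · exact h
  exact (prob_compl_eq_zero_iff hAmeas).mp hcomp
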